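/- Let η ∈ A^ℕ be a non-periodic Toeplitz sequence over a finite alphabet A, and let X_η be the orbit closure of η under the shift. Then X_η has property (*): for every word μ ∈ ℒ(X_η) there exists y ∈ X_η with P_{|μ|}(y) = {μ}. In fact, if μ = η_{[0, m−1]}, then P_m(η_{[m,∞)}) = {μ}. -/

import Mathlib

open Function Set

variable {A : Type*}

/-- The one-sided shift map. -/
def shiftMap (x : ℕ → A) : ℕ → A := fun n => x (n + 1)

/-- Prepend a finite word to a one-sided sequence. -/
def prependWord (μ : List A) (x : ℕ → A) : ℕ → A :=
  fun n => if h : n < μ.length then μ.get ⟨n, h⟩ else x (n - μ.length)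

/-- `PastSet X l x` is the set `P_l(x)` of words `μ` of length `l` with `μx ∈ X`. -/
def PastSet (X : Set (ℕ → A)) (l : ℕ) (x : ℕ → A) : Set (List A) :=
  {μ | μ.length = l ∧ prependWord μ x ∈ X}

/-- A point is left special if it has at least two shift-preimages in `X`. -/
def IsLeftSpecial (X : Set (ℕ → A)) (x : ℕ → A) : Prop :=
  x ∈ X ∧ ∃ y z, y ∈ X ∧ z ∈ X ∧ y ≠ z ∧ shiftMap y = x ∧ shiftMap z = x

/-- The set of left special elements of `X`. -/
def SpL (X : Set (ℕ → A)) : Set (ℕ → A) := {x | IsLeftSpecial X x}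

/-- A point is periodic if `σ^n x = x` for some `n ≥ 1`. -/
def IsPer (x : ℕ → A) : Prop := ∃ n ≥ 1, shiftMap^[n] x = x

/-- The language of `X`: finite words occurring as factors of points of `X`. -/
def Lang (X : Set (ℕ → A)) : Set (List A) :=
  {μ | ∃ x ∈ X, ∃ n : ℕ, ∀ i : Fin μ.length, x (n + i) = μ.get i}

/-- The two-sided shift space associated with `X` (inverse limit identification). -/
def twoSided (X : Set (ℕ → A)) : Set (ℤ → A) :=
  {z | ∀ n : ℤ, (fun i : ℕ => z (n + i)) ∈ X}

/-- Left special elements of a two-sided shift space. -/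
def SpLZ (Y : Set (ℤ → A)) : Set (ℤ → A) :=
  {z | z ∈ Y ∧ ∃ z' ∈ Y, z' (-1) ≠ z (-1) ∧ ∀ i : ℕ, z' i = z i}

/-- Right tail equivalence. -/
def Rte (x y : ℕ → A) : Prop := ∃ M M' : ℕ, shiftMap^[M] x = shiftMap^[M'] y

section Aux


lemma shift_iter_apply (x : ℕ → A) (n t : ℕ) : shiftMap^[n] x t = x (t + n) := by
  induction n generalizing x t with
  | zero => rfl
  | succ k ih =>
    rw [Function.iterate_succ_apply, ih]
    rfl

lemma closure_window {B : Type*} [TopologicalSpace B] [DiscreteTopology B]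
    {S : Set (ℕ → B)} {x : ℕ → B} (hx : x ∈ closure S) (L : ℕ) :
    ∃ z ∈ S, ∀ t < L, z t = x t := by
  have hU : IsOpen {w : ℕ → B | ∀ t < L, w t = x t} := by
    have he : {w : ℕ → B | ∀ t < L, w t = x t}
        = ⋂ t ∈ Finset.range L, (fun w : ℕ → B => w t) ⁻¹' {x t} := by
      ext w; simp [Finset.mem_range]
    rw [he]
    exact isOpen_biInter_finset fun t _ =>
      (continuous_apply t).isOpen_preimage _ (isOpen_discrete _)
  have hxU : x ∈ {w : ℕ → B | ∀ t < L, w t = x t} := fun t _ => rfl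
  rcases mem_closure_iff.mp hx _ hU hxU with ⟨z, hz1, hz2⟩
  exact ⟨z, hz2, hz1⟩

lemma mem_closure_of_windows {B : Type*} [TopologicalSpace B] [DiscreteTopology B]
    {S : Set (ℕ → B)} {x : ℕ → B}
    (h : ∀ L : ℕ, ∃ z ∈ S, ∀ t < L, z t = x t) : x ∈ closure S := by
  choose z hzS hz using h
  have ht : Filter.Tendsto z Filter.atTop (nhds x) := by
    rw [tendsto_pi_nhds]
    intro t
    refine Filter.Tendsto.congr' ?_ tendsto_const_nhds
    filter_upwards [Filter.eventually_ge_atTop (t + 1)] with L hL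
    exact (hz L t (by omega)).symm
  exact mem_closure_of_tendsto ht (Filter.Eventually.of_forall hzS)

lemma common_period (η : ℕ → A)
    (htoe : ∀ n : ℕ, ∃ p : ℕ, 1 ≤ p ∧ ∀ k : ℕ, η (n + k * p) = η n) (M : ℕ) :
    ∃ p : ℕ, 1 ≤ p ∧ ∀ t < M, ∀ c : ℕ, η (t + c * p) = η t := by
  induction M with
  | zero => exact ⟨1, le_refl 1, by omega⟩
  | succ M ih =>
    obtain ⟨p, hp1, hp⟩ := ih
    obtain ⟨q, hq1, hq⟩ := htoe M
    refine ⟨p * q, Nat.mul_pos hp1 hq1, ?_⟩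
    intro t ht c
    rcases Nat.lt_succ_iff_lt_or_eq.mp ht with h | h
    · have harg : t + c * (p * q) = t + c * q * p := by ring
      rw [harg]; exact hp t h (c * q)
    · subst h
      have harg : t + c * (p * q) = t + c * p * q := by ring
      rw [harg]; exact hq (c * p)

lemma tail_per (η : ℕ → A)
    (htoe : ∀ n : ℕ, ∃ p : ℕ, 1 ≤ p ∧ ∀ k : ℕ, η (n + k * p) = η n)
    {N P : ℕ} (hP : 1 ≤ P)
    (h : ∀ s, N ≤ s → η (s + P) = η s) : ∀ s, η (s + P) = η s := by
  intro s
  obtain ⟨q, hq1, hq⟩ := htoe s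
  obtain ⟨q', hq'1, hq'⟩ := htoe (s + P)
  set D := q * q' * (N + 1) with hD
  have hD1 : N + 1 ≤ D := by
    calc N + 1 ≤ q * q' * (N + 1) := Nat.le_mul_of_pos_left _ (Nat.mul_pos hq1 hq'1)
    _ = D := rfl
  have h1 : η (s + D) = η s := by
    have harg : s + D = s + q' * (N + 1) * q := by rw [hD]; ring
    rw [harg]; exact hq (q' * (N + 1))
  have h2 : η (s + P + D) = η (s + P) := by
    have harg : s + P + D = s + P + q * (N + 1) * q' := by rw [hD]; ring
    rw [harg]; exact hq' (q * (N + 1))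
  have h3 : η (s + D + P) = η (s + D) := h (s + D) (by omega)
  calc η (s + P) = η (s + P + D) := h2.symm
    _ = η (s + D + P) := by rw [show s + P + D = s + D + P by ring]
    _ = η (s + D) := h3
    _ = η s := h1

theorem key (η : ℕ → A) [TopologicalSpace A] [DiscreteTopology A]
    (htoe : ∀ n : ℕ, ∃ p : ℕ, 1 ≤ p ∧ ∀ k : ℕ, η (n + k * p) = η n)
    (hnp : ∀ p : ℕ, 1 ≤ p → shiftMap^[p] η ≠ η) (m : ℕ) :
    PastSet (closure {y | ∃ n : ℕ, shiftMap^[n] η = y}) m (shiftMap^[m] η)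
      = {(List.range m).map η} := by
  have hprep : prependWord ((List.range m).map η) (shiftMap^[m] η) = η := by
    funext t
    unfold prependWord
    by_cases h : t < ((List.range m).map η).length
    · simp only [h, dif_pos]
      simp
    · simp only [h, dif_neg, not_false_iff]
      rw [shift_iter_apply]
      have hm : ((List.range m).map η).length = m := by simp
      rw [hm] at h ⊢
      congr 1
      omega
  ext ν
  simp only [PastSet, mem_setOf_eq, mem_singleton_iff]
  constructor
  · rintro ⟨hlen, hmem⟩
    set x := prependWord ν (shiftMap^[m] η) with hx
    have hxtail : ∀ t, m ≤ t → x t = η t := by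
      intro t htm
      rw [hx]
      unfold prependWord
      rw [dif_neg (by omega : ¬ t < ν.length)]
      rw [shift_iter_apply, hlen]
      congr 1
      omega
    have hxi : ∀ (i : ℕ) (h : i < ν.length), x i = ν.get ⟨i, h⟩ := by
      intro i h
      rw [hx]
      unfold prependWord
      rw [dif_pos h]
    have hwin : ∀ L, ∃ n, ∀ t < L, η (n + t) = x t := by
      intro L
      obtain ⟨z, ⟨n, rfl⟩, hz⟩ := closure_window hmem L
      refine ⟨n, fun t ht => ?_⟩
      rw [← hz t ht, shift_iter_apply, Nat.add_comm]
    have hmain : ∀ i < m, x i = η i := by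
      by_cases hex : ∃ n, ∀ t, η (n + t) = x t
      · obtain ⟨n, hn⟩ := hex
        rcases Nat.eq_zero_or_pos n with h0 | h1
        · intro i _
          rw [← hn i, h0, Nat.zero_add]
        · exfalso
          apply hnp n h1
          have htl : ∀ s, m ≤ s → η (s + n) = η s := by
            intro s hs
            have h' := hn s
            rw [hxtail s hs] at h'
            rw [Nat.add_comm]
            exact h'
          have hall := tail_per η htoe h1 htl
          funext t
          rw [shift_iter_apply]
          exact hall t
      · push_neg at hex
        choose tt htt using hex
        have hGW : ∀ L, ∃ n, m ≤ n ∧ ∀ t < L, η (n + t) = x t := by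
          intro L
          set T := (Finset.range m).sup tt + 1 with hT
          obtain ⟨n, hn⟩ := hwin (L + T)
          refine ⟨n, ?_, fun t ht => hn t (by omega)⟩
          by_contra hlt
          push_neg at hlt
          apply htt n
          apply hn (tt n)
          have : tt n ≤ (Finset.range m).sup tt := Finset.le_sup (Finset.mem_range.mpr hlt)
          omega
        intro i him
        obtain ⟨p, hp1, hp⟩ := htoe i
        set good : ℕ → Prop :=
          fun r => ∀ L, ∃ n, (m ≤ n ∧ ∀ t < L, η (n + t) = x t) ∧ n % p = r with hgood
        have hex_good : ∃ r, good r := by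
          by_contra hng
          push_neg at hng
          have hng' : ∀ r, ∃ L, ¬ ∃ n, (m ≤ n ∧ ∀ t < L, η (n + t) = x t) ∧ n % p = r :=
            fun r => not_forall.mp (hng r)
          choose f hf using hng'
          obtain ⟨n, hn1, hn2⟩ := hGW ((Finset.range p).sup f)
          apply hf (n % p)
          refine ⟨n, ⟨hn1, fun t ht => hn2 t ?_⟩, rfl⟩
          have : f (n % p) ≤ (Finset.range p).sup f :=
            Finset.le_sup (Finset.mem_range.mpr (Nat.mod_lt n hp1))
          omega
        obtain ⟨r, hr⟩ := hex_good
        have hadd : ∀ r1 r2, good r1 → good r2 → good ((r1 + r2) % p) := by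
          intro r1 r2 h1 h2 L
          obtain ⟨n, ⟨hnm, hn⟩, hnr⟩ := h1 L
          obtain ⟨n', ⟨hn'm, hn'⟩, hn'r⟩ := h2 (n + L)
          refine ⟨n' + n, ⟨by omega, fun t ht => ?_⟩, ?_⟩
          · have e1 : η (n' + (n + t)) = x (n + t) := hn' (n + t) (by omega)
            have e2 : x (n + t) = η (n + t) := hxtail (n + t) (by omega)
            have e3 : η (n + t) = x t := hn t ht
            calc η (n' + n + t) = η (n' + (n + t)) := by rw [Nat.add_assoc]
              _ = x t := by rw [e1, e2, e3]
          · rw [Nat.add_mod, hn'r, hnr, Nat.add_comm r2 r1]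
        have hrr : r % p = r := by
          obtain ⟨n, _, hnr⟩ := hr 0
          rw [← hnr, Nat.mod_mod_of_dvd _ dvd_rfl]
        have hpow : ∀ k : ℕ, good ((k + 1) * r % p) := by
          intro k
          induction k with
          | zero => rw [Nat.one_mul, hrr]; exact hr
          | succ k ih =>
            have h' := hadd _ _ ih hr
            rw [Nat.mod_add_mod] at h'
            have : (k + 1) * r + r = (k + 1 + 1) * r := by ring
            rwa [this] at h'
        have h0 : good 0 := by
          have h' := hpow (p - 1)
          rw [show p - 1 + 1 = p by omega, Nat.mul_mod_right] at h'
          exact h'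
        obtain ⟨n, ⟨hnm, hn⟩, hn0⟩ := h0 (i + 1)
        have hxi' : η (n + i) = x i := hn i (by omega)
        rw [← hxi']
        obtain ⟨c, hc⟩ := Nat.dvd_of_mod_eq_zero hn0
        rw [show n + i = i + c * p by rw [hc]; ring]
        exact hp c
    apply List.ext_get (by simp [hlen])
    intro n h1 h2
    have h2' : n < m := by simpa using h2
    rw [← hxi n h1]
    simp only [List.get_eq_getElem, List.getElem_map, List.getElem_range]
    simpa using hmain n h2'
  · rintro rfl
    refine ⟨by simp, ?_⟩
    rw [hprep]
    exact subset_closure ⟨0, rfl⟩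

lemma orbit_closure_shift (η : ℕ → A) [TopologicalSpace A] [DiscreteTopology A]
    (htoe : ∀ n : ℕ, ∃ p : ℕ, 1 ≤ p ∧ ∀ k : ℕ, η (n + k * p) = η n) (j : ℕ) :
    closure {y | ∃ n : ℕ, shiftMap^[n] (shiftMap^[j] η) = y}
      = closure {y | ∃ n : ℕ, shiftMap^[n] η = y} := by
  apply subset_antisymm
  · apply closure_mono
    rintro y ⟨n, rfl⟩
    exact ⟨n + j, by rw [Function.iterate_add_apply]⟩
  · refine closure_minimal ?_ isClosed_closure
    rintro y ⟨k, rfl⟩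
    apply mem_closure_of_windows
    intro L
    obtain ⟨p, hp1, hp⟩ := common_period η htoe (k + L)
    refine ⟨shiftMap^[k + j * p - j] (shiftMap^[j] η), ⟨_, rfl⟩, ?_⟩
    intro t ht
    rw [shift_iter_apply, shift_iter_apply, shift_iter_apply]
    have hj : j ≤ j * p := Nat.le_mul_of_pos_right j hp1
    rw [show t + (k + j * p - j) + j = t + k + j * p by omega]
    exact hp (t + k) (by omega) j

theorem stmt11' [Finite A] [TopologicalSpace A] [DiscreteTopology A]
    (η : ℕ → A)
    (htoe : ∀ n : ℕ, ∃ p : ℕ, 1 ≤ p ∧ ∀ k : ℕ, η (n + k * p) = η n)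
    (hnp : ∀ p : ℕ, 1 ≤ p → shiftMap^[p] η ≠ η) :
    (∀ μ ∈ Lang (closure {y | ∃ n : ℕ, shiftMap^[n] η = y}),
      ∃ x ∈ closure {y | ∃ n : ℕ, shiftMap^[n] η = y},
        PastSet (closure {y | ∃ n : ℕ, shiftMap^[n] η = y}) μ.length x = {μ}) ∧
    (∀ m : ℕ, PastSet (closure {y | ∃ n : ℕ, shiftMap^[n] η = y}) m (shiftMap^[m] η)
        = {(List.range m).map η}) := by
  constructor
  · intro μ hμ
    obtain ⟨y, hyX, nn, hocc⟩ := hμ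
    obtain ⟨z, ⟨k, rfl⟩, hz⟩ := closure_window hyX (nn + μ.length)
    have hocc' : ∀ i : Fin μ.length, η (k + nn + (i : ℕ)) = μ.get i := by
      intro i
      have h1 := hz (nn + (i : ℕ)) (by omega)
      rw [shift_iter_apply] at h1
      rw [show k + nn + (i : ℕ) = nn + (i : ℕ) + k by ring, h1]
      exact hocc i
    set j := k + nn with hj
    set η₂ := shiftMap^[j] η with hη₂
    have hη₂app : ∀ t, η₂ t = η (t + j) := fun t => shift_iter_apply η j t
    have htoe₂ : ∀ n, ∃ p, 1 ≤ p ∧ ∀ kk, η₂ (n + kk * p) = η₂ n := by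
      intro n
      obtain ⟨p, hp1, hp⟩ := htoe (n + j)
      refine ⟨p, hp1, fun kk => ?_⟩
      rw [hη₂app, hη₂app, show n + kk * p + j = n + j + kk * p by ring]
      exact hp kk
    have hnp₂ : ∀ P, 1 ≤ P → shiftMap^[P] η₂ ≠ η₂ := by
      intro P hP heq
      apply hnp P hP
      have htl : ∀ s, j ≤ s → η (s + P) = η s := by
        intro s hs
        have h' := congrFun heq (s - j)
        rw [shift_iter_apply, hη₂app, hη₂app] at h'
        rw [show s - j + P + j = s + P by omega, show s - j + j = s by omega] at h'
        exact h'
      have hall := tail_per η htoe hP htl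
      funext t
      rw [shift_iter_apply]
      exact hall t
    refine ⟨shiftMap^[μ.length] η₂, ?_, ?_⟩
    · apply subset_closure
      exact ⟨μ.length + j, by rw [Function.iterate_add_apply, ← hη₂]⟩
    · have hkey := key η₂ htoe₂ hnp₂ μ.length
      rw [hη₂, orbit_closure_shift η htoe j, ← hη₂] at hkey
      rw [hkey]
      congr 1
      apply List.ext_get (by simp)
      intro n h1 h2
      have h2' : n < μ.length := h2
      rw [List.get_eq_getElem, List.getElem_map, List.getElem_range]
      rw [hη₂app]
      have := hocc' ⟨n, h2'⟩
      rw [← this]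
      congr 1
      simp [hj]
      omega
  · intro m
    exact key η htoe hnp m

end Aux

/-- the orbit closure of a non-periodic Toeplitz sequence has property (*);
in fact `P_m(η_{[m,∞)}) = {η_{[0,m-1]}}`. -/

theorem stmt11 [Finite A] [TopologicalSpace A] [DiscreteTopology A]
    (η : ℕ → A)
    (htoe : ∀ n : ℕ, ∃ p : ℕ, 1 ≤ p ∧ ∀ k : ℕ, η (n + k * p) = η n)
    (hnp : ∀ p : ℕ, 1 ≤ p → shiftMap^[p] η ≠ η) :
    (∀ μ ∈ Lang (closure {y | ∃ n : ℕ, shiftMap^[n] η = y}),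
      ∃ x ∈ closure {y | ∃ n : ℕ, shiftMap^[n] η = y},
        PastSet (closure {y | ∃ n : ℕ, shiftMap^[n] η = y}) μ.length x = {μ}) ∧
    (∀ m : ℕ, PastSet (closure {y | ∃ n : ℕ, shiftMap^[n] η = y}) m (shiftMap^[m] η)
        = {(List.range m).map η}) :=
  stmt11' η htoe hnp
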